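/- arXiv:1308.2314 — 8 statements merged into one kernel-verified Lean document; each statement's English description precedes it below -/
import Mathlib

section
/- The Kustaanheimo-Stiefel map K.S.(z,w) = (Q, P) = (z̄ i z, z̄ i w / (2|z|²)), defined for z ≠ 0, is constant on the circles {(e^{iθ} z, e^{iθ} w) : θ ∈ ℝ}; conversely, if K.S.(z,w) = K.S.(z',w') then there exists θ with (z',w') = (e^{iθ} z, e^{iθ} w), provided both points lie in Σ¹ = {(z,w) : Re{z̄ i w} = 0, z ≠ 0}. -/
/-- The quaternion unit `i`. -/
def qi : Quaternion ℝ := ⟨0,1,0,0⟩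

/-- The Kustaanheimo-Stiefel map (z,w) ↦ (Q,P) = (z̄ i z, z̄ i w / (2|z|²)). -/
noncomputable def KS (p : Quaternion ℝ × Quaternion ℝ) : Quaternion ℝ × Quaternion ℝ :=
  (star p.1 * qi * p.1, ((2 * ‖p.1‖ ^ 2)⁻¹ : ℝ) • (star p.1 * qi * p.2))

/-- e^{iθ} = cos θ + i sin θ. -/
noncomputable def eiθ (θ : ℝ) : Quaternion ℝ :=
  Real.cos θ • (1 : Quaternion ℝ) + Real.sin θ • qi

@[simp] lemma qi_re : qi.re = 0 := rfl
@[simp] lemma qi_imI : qi.imI = 1 := rfl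
@[simp] lemma qi_imJ : qi.imJ = 0 := rfl
@[simp] lemma qi_imK : qi.imK = 0 := rfl
@[simp] lemma q1_re : (1 : Quaternion ℝ).re = 1 := rfl
@[simp] lemma q1_imI : (1 : Quaternion ℝ).imI = 0 := rfl
@[simp] lemma q1_imJ : (1 : Quaternion ℝ).imJ = 0 := rfl
@[simp] lemma q1_imK : (1 : Quaternion ℝ).imK = 0 := rfl
@[simp] lemma q0_re : (0 : Quaternion ℝ).re = 0 := rfl
@[simp] lemma q0_imI : (0 : Quaternion ℝ).imI = 0 := rfl
@[simp] lemma q0_imJ : (0 : Quaternion ℝ).imJ = 0 := rfl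
@[simp] lemma q0_imK : (0 : Quaternion ℝ).imK = 0 := rfl

lemma normSq_eiθ (θ : ℝ) : Quaternion.normSq (eiθ θ) = 1 := by
  simp only [Quaternion.normSq_def', eiθ]
  norm_num [Quaternion.ext_iff]

lemma norm_eiθ (θ : ℝ) : ‖eiθ θ‖ = 1 := by
  have : ‖eiθ θ‖ = Real.sqrt (Quaternion.normSq (eiθ θ)) := rfl
  rw [this, normSq_eiθ, Real.sqrt_one]

lemma norm_qi : ‖qi‖ = 1 := by
  have h : Quaternion.normSq qi = 1 := by simp [Quaternion.normSq_def']
  have : ‖qi‖ = Real.sqrt (Quaternion.normSq qi) := rfl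
  rw [this, h, Real.sqrt_one]

lemma qi_ne : (qi : Quaternion ℝ) ≠ 0 := by
  simp [Quaternion.ext_iff]

lemma star_qi_eiθ (θ : ℝ) : star (eiθ θ) * qi * eiθ θ = qi := by
  ext <;>
    simp [eiθ, Quaternion.ext_iff, Quaternion.re_mul, Quaternion.imI_mul,
      Quaternion.imJ_mul, Quaternion.imK_mul] <;>
    ring_nf <;> simp [Real.cos_sq_add_sin_sq]

lemma unit_comm_eq_eiθ (u : Quaternion ℝ) (hc : qi * u = u * qi)
    (hn : Quaternion.normSq u = 1) : ∃ θ, u = eiθ θ := by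
  have hK : u.imK = 0 := by
    have := congrArg QuaternionAlgebra.imJ hc
    simp [Quaternion.imJ_mul] at this
    linarith
  have hJ : u.imJ = 0 := by
    have := congrArg QuaternionAlgebra.imK hc
    simp [Quaternion.imK_mul] at this
    linarith
  have h1 : u.re ^ 2 + u.imI ^ 2 = 1 := by
    rw [Quaternion.normSq_def'] at hn
    nlinarith
  set c : ℂ := ⟨u.re, u.imI⟩ with hcdef
  have hre : c.re = u.re := rfl
  have him : c.im = u.imI := rfl
  have hcne : c ≠ 0 := by
    intro h
    rw [Complex.ext_iff, hre, him] at h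
    simp at h
    nlinarith [h.1, h.2]
  have habs : ‖c‖ = 1 := by
    rw [Complex.norm_def, Complex.normSq_apply, hre, him]
    nlinarith [Real.sq_sqrt (show (0:ℝ) ≤ u.re*u.re + u.imI*u.imI by nlinarith),
      Real.sqrt_nonneg (u.re*u.re + u.imI*u.imI)]
  refine ⟨c.arg, ?_⟩
  have hcos := Complex.cos_arg hcne
  have hsin := Complex.sin_arg c
  rw [habs, div_one, hre] at hcos
  rw [habs, div_one, him] at hsin
  ext <;> simp [eiθ, hJ, hK, hcos, hsin]

/- STATEMENT 5: K.S. is constant on the circles {(e^{iθ}z, e^{iθ}w)}; conversely if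
K.S.(z,w) = K.S.(z',w') with both points in Σ¹ = {Re{z̄ i w} = 0, z ≠ 0}, then
(z',w') = (e^{iθ}z, e^{iθ}w) for some θ. -/
theorem KS_fibers :
    (∀ (z w : Quaternion ℝ) (θ : ℝ), KS (eiθ θ * z, eiθ θ * w) = KS (z, w)) ∧
    (∀ z w z' w' : Quaternion ℝ,
      z ≠ 0 → (star z * qi * w).re = 0 →
      z' ≠ 0 → (star z' * qi * w').re = 0 →
      KS (z, w) = KS (z', w') →
      ∃ θ : ℝ, z' = eiθ θ * z ∧ w' = eiθ θ * w) := by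
  constructor
  · intro z w θ
    have key : ∀ v : Quaternion ℝ, star (eiθ θ * z) * qi * (eiθ θ * v) = star z * qi * v := by
      intro v
      rw [star_mul]
      calc star z * star (eiθ θ) * qi * (eiθ θ * v)
          = star z * (star (eiθ θ) * qi * eiθ θ) * v := by simp only [mul_assoc]
        _ = star z * qi * v := by rw [star_qi_eiθ]
    have hnorm : ‖eiθ θ * z‖ = ‖z‖ := by rw [norm_mul, norm_eiθ, one_mul]
    simp only [KS, key, hnorm]
  · intro z w z' w' hz _ hz' _ h
    have h1 : star z * qi * z = star z' * qi * z' := congrArg Prod.fst h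
    have h2 : ((2 * ‖z‖ ^ 2)⁻¹ : ℝ) • (star z * qi * w)
        = ((2 * ‖z'‖ ^ 2)⁻¹ : ℝ) • (star z' * qi * w') := congrArg Prod.snd h
    have hnz : ‖z'‖ = ‖z‖ := by
      have e : ∀ v : Quaternion ℝ, ‖star v * qi * v‖ = ‖v‖ ^ 2 := by
        intro v
        rw [norm_mul, norm_mul, norm_star, norm_qi]
        ring
      have := (e z).symm.trans (by rw [h1, e z'])
      have h0 : (0:ℝ) ≤ ‖z‖ := norm_nonneg z
      have h0' : (0:ℝ) ≤ ‖z'‖ := norm_nonneg z'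
      nlinarith
    have h2' : star z * qi * w = star z' * qi * w' := by
      rw [hnz] at h2
      have hne : ((2 * ‖z‖ ^ 2)⁻¹ : ℝ) ≠ 0 := by
        have : ‖z‖ ≠ 0 := norm_ne_zero_iff.mpr hz
        positivity
      exact smul_right_injective (Quaternion ℝ) hne h2
    set u : Quaternion ℝ := z' * z⁻¹ with hu
    have huz : u * z = z' := by
      rw [hu, mul_assoc, inv_mul_cancel₀ hz, mul_one]
    have hsu : star u * qi * u = qi := by
      have : star u * qi * u = star z⁻¹ * (star z' * qi * z') * z⁻¹ := by
        rw [hu, star_mul]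
        simp only [mul_assoc]
      rw [this, ← h1]
      calc star z⁻¹ * (star z * qi * z) * z⁻¹
          = (star z⁻¹ * star z) * qi * (z * z⁻¹) := by simp only [mul_assoc]
        _ = star (z * z⁻¹) * qi * (z * z⁻¹) := by rw [star_mul]
        _ = qi := by rw [mul_inv_cancel₀ hz]; simp
    have hnu : Quaternion.normSq u = 1 := by
      rw [Quaternion.normSq_eq_norm_mul_self, hu, norm_mul, hnz, norm_inv]
      have : ‖z‖ ≠ 0 := norm_ne_zero_iff.mpr hz
      field_simp
    have hmul_star : u * star u = 1 := by
      rw [Quaternion.self_mul_star, hnu]; simp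
    have hcomm : qi * u = u * qi := by
      calc qi * u = (u * star u) * qi * u := by rw [hmul_star, one_mul]
        _ = u * (star u * qi * u) := by simp only [mul_assoc]
        _ = u * qi := by rw [hsu]
    obtain ⟨θ, hθ⟩ := unit_comm_eq_eiθ u hcomm hnu
    refine ⟨θ, by rw [← hθ, huz], ?_⟩
    -- w' = u * w
    have hszne : star z ≠ 0 := star_ne_zero.mpr hz
    have step1 : qi * w = star u * qi * w' := by
      have : star z * (qi * w) = star z * (star u * (qi * w')) := by
        calc star z * (qi * w) = star z * qi * w := (mul_assoc (star z) qi w).symm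
          _ = star z' * qi * w' := h2'
          _ = star z * star u * qi * w' := by rw [← huz, star_mul]
          _ = star z * (star u * (qi * w')) := by simp only [mul_assoc]
      have := mul_left_cancel₀ hszne this
      rw [this]; simp only [mul_assoc]
    have step2 : qi * (u * w) = qi * w' := by
      calc qi * (u * w) = (qi * u) * w := (mul_assoc qi u w).symm
        _ = (u * qi) * w := by rw [hcomm]
        _ = u * (qi * w) := mul_assoc u qi w
        _ = u * (star u * qi * w') := by rw [step1]
        _ = (u * star u) * qi * w' := by simp only [mul_assoc]
        _ = qi * w' := by rw [hmul_star, one_mul]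
    rw [← hθ]
    exact (mul_left_cancel₀ qi_ne step2).symm
end

section
/- Any smooth function on T*ℍ of the form (K.S.)*F (i.e. the pullback by the Kustaanheimo-Stiefel map of a function F on T*(Im ℍ), extended to all of ℍ∖{0} × ℍ by its defining formula) Poisson-commutes with BL(z,w) = Re{z̄ i w}; consequently BL is a first integral of the Hamiltonian flow of (K.S.)*F and the cone Σ⁰ = {BL = 0}∖{(0,0)} is flow-invariant. -/
instance : StarModule ℝ (Quaternion ℝ) := ⟨fun r a => by ext <;> simp⟩

/-- The rotation quaternion `cos θ + sin θ · i`. -/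
def qcs (c s : ℝ) : Quaternion ℝ := ⟨c,s,0,0⟩

lemma qcs_conj (c s : ℝ) (h : c*c + s*s = 1) : star (qcs c s) * qi * qcs c s = qi := by
  ext <;> simp [Quaternion.re_mul, Quaternion.imI_mul, Quaternion.imJ_mul, Quaternion.imK_mul] <;> simp [qi, qcs] <;> ring_nf <;> nlinarith [h]

lemma qcs_key (c s : ℝ) (h : c*c + s*s = 1) (z y : Quaternion ℝ) :
    star (qcs c s * z) * qi * (qcs c s * y) = star z * qi * y := by
  have hk := qcs_conj c s h
  rw [star_mul]
  calc star z * star (qcs c s) * qi * (qcs c s * y)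
      = star z * (star (qcs c s) * qi * qcs c s) * y := by simp only [mul_assoc]
    _ = star z * qi * y := by rw [hk]

lemma qcs_norm (c s : ℝ) (h : c*c + s*s = 1) : ‖qcs c s‖ = 1 := by
  have h2 : ‖qcs c s‖ * ‖qcs c s‖ = 1 := by
    rw [← Quaternion.normSq_eq_norm_mul_self, Quaternion.normSq_def']
    simpa [qcs, pow_two] using h
  nlinarith [norm_nonneg (qcs c s)]

lemma KS_invariant (c s : ℝ) (h : c*c + s*s = 1) (z w : Quaternion ℝ) :
    KS (qcs c s * z, qcs c s * w) = KS (z, w) := by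
  unfold KS
  have hn : ‖qcs c s * z‖ = ‖z‖ := by rw [norm_mul, qcs_norm c s h, one_mul]
  exact Prod.ext (qcs_key c s h z z) (by rw [hn, qcs_key c s h z w])

lemma qcs_eq (c s : ℝ) : qcs c s = c • (1 : Quaternion ℝ) + s • qi := by
  ext <;> simp [Quaternion.re_smul, Quaternion.imI_smul, Quaternion.imJ_smul, Quaternion.imK_smul, Quaternion.re_one, Quaternion.imI_one, Quaternion.imJ_one, Quaternion.imK_one] <;> simp [qcs, qi]

lemma hasDerivAt_path (z : Quaternion ℝ) :
    HasDerivAt (fun θ : ℝ => qcs (Real.cos θ) (Real.sin θ) * z) (qi * z) 0 := by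
  have h : (fun θ : ℝ => qcs (Real.cos θ) (Real.sin θ) * z)
      = fun θ : ℝ => Real.cos θ • z + Real.sin θ • (qi * z) := by
    funext θ; rw [qcs_eq, add_mul, smul_mul_assoc, smul_mul_assoc, one_mul]
  rw [h]
  exact (((Real.hasDerivAt_cos 0).smul_const z).add
    ((Real.hasDerivAt_sin 0).smul_const (qi * z))).congr_deriv (by simp)

lemma KS_differentiableAt {z w : Quaternion ℝ} (hz : z ≠ 0) :
    DifferentiableAt ℝ KS (z, w) := by
  have h1 : DifferentiableAt ℝ
      (fun p : Quaternion ℝ × Quaternion ℝ => star p.1 * qi * p.1) (z,w) :=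
    (differentiableAt_fst.star.mul (differentiableAt_const qi)).mul differentiableAt_fst
  have hn : DifferentiableAt ℝ (fun p : Quaternion ℝ × Quaternion ℝ => ‖p.1‖^2) (z,w) := by
    have he : (fun p : Quaternion ℝ × Quaternion ℝ => ‖p.1‖^2)
        = fun p => (inner ℝ p.1 p.1 : ℝ) := by
      ext p; rw [real_inner_self_eq_norm_sq]
    rw [he]
    exact differentiableAt_fst.inner ℝ differentiableAt_fst
  have hinv : DifferentiableAt ℝ
      (fun p : Quaternion ℝ × Quaternion ℝ => (2 * ‖p.1‖^2)⁻¹) (z,w) := by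
    apply DifferentiableAt.inv ((differentiableAt_const (2:ℝ)).mul hn)
    have : 0 < ‖z‖ := norm_pos_iff.2 hz
    simp only [Pi.mul_apply]
    positivity
  exact h1.prodMk <| hinv.smul <|
    (differentiableAt_fst.star.mul (differentiableAt_const qi)).mul differentiableAt_snd

/- STATEMENT 9: Any function of the form (K.S.)*F Poisson-commutes with
BL(z,w) = Re{z̄ i w}.  With respect to ω = Re{dw̄ ∧ dz}, the Hamiltonian vector
field of −BL is (iz, iw); so the Poisson bracket {(K.S.)*F, BL} is, up to sign,
the derivative of (K.S.)*F along (iz, iw), and its vanishing expresses both that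
BL is a first integral of the flow of (K.S.)*F and that Σ⁰ = {BL = 0}∖{0} is
invariant under that flow. -/
theorem KS_pullback_poisson_commutes_BL
    (F : Quaternion ℝ × Quaternion ℝ → ℝ) (hF : Differentiable ℝ F)
    (z w : Quaternion ℝ) (hz : z ≠ 0) :
    fderiv ℝ (fun p => F (KS p)) (z, w) (qi * z, qi * w) = 0 := by
  set c : ℝ → Quaternion ℝ × Quaternion ℝ :=
    fun θ => (qcs (Real.cos θ) (Real.sin θ) * z, qcs (Real.cos θ) (Real.sin θ) * w) with hc
  have hc0 : c 0 = (z, w) := by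
    simp [hc]
    constructor <;> · ext <;> simp [Quaternion.re_mul, Quaternion.imI_mul, Quaternion.imJ_mul, Quaternion.imK_mul] <;> simp [qcs]
  have hG : DifferentiableAt ℝ (fun p => F (KS p)) (z, w) :=
    (hF (KS (z, w))).comp (z, w) (KS_differentiableAt hz)
  have hpath : HasDerivAt c (qi * z, qi * w) 0 :=
    (hasDerivAt_path z).prodMk (hasDerivAt_path w)
  have hcomp : HasDerivAt (fun θ => F (KS (c θ)))
      (fderiv ℝ (fun p => F (KS p)) (z, w) (qi * z, qi * w)) 0 := by
    have hG' : HasFDerivAt (fun p => F (KS p))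
        (fderiv ℝ (fun p => F (KS p)) (z, w)) (c 0) := hc0 ▸ hG.hasFDerivAt
    exact hG'.comp_hasDerivAt 0 hpath
  have hconst : (fun θ => F (KS (c θ))) = fun _ => F (KS (z, w)) := by
    funext θ
    rw [hc]
    simp only
    rw [KS_invariant _ _ (by nlinarith [Real.sin_sq_add_cos_sq θ]) z w]
  rw [hconst] at hcomp
  exact hcomp.unique (hasDerivAt_const 0 _)
end

section
/- The pullback by K.S. of the time-rescaled Kepler Hamiltonian ‖Q‖(T(P,Q)+f), where T(P,Q) = ‖P‖²/(2μ₀) − μ₀M₀/‖Q‖, equals the harmonic-oscillator Hamiltonian K(z,w) = |w|²/(8μ₀) + f|z|² − μ₀M₀ on {(z,w) : z ≠ 0, Re{z̄ i w} = 0}. -/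
/- STATEMENT 10: The pullback by K.S. of the time-rescaled Kepler Hamiltonian
‖Q‖(T(P,Q)+f), with T(P,Q) = ‖P‖²/(2μ₀) − μ₀M₀/‖Q‖, equals
K(z,w) = |w|²/(8μ₀) + f|z|² − μ₀M₀ on {z ≠ 0, Re{z̄ i w} = 0},
where (Q,P) = (z̄ i z, z̄ i w/(2|z|²)). -/
theorem KS_pullback_kepler (μ₀ M₀ f : ℝ) (hμ : 0 < μ₀) (hM : 0 < M₀) (hf : 0 < f)
    (z w : Quaternion ℝ) (hz : z ≠ 0) (hBL : (star z * qi * w).re = 0) :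
    (‖star z * qi * z‖) *
        (‖((2 * ‖z‖ ^ 2)⁻¹ : ℝ) • (star z * qi * w)‖ ^ 2 / (2 * μ₀)
          - μ₀ * M₀ / ‖star z * qi * z‖ + f)
      = ‖w‖ ^ 2 / (8 * μ₀) + f * ‖z‖ ^ 2 - μ₀ * M₀ := by
  have hzn : (0:ℝ) < ‖z‖ := norm_pos_iff.mpr hz
  have h1 : ‖star z * qi * z‖ = ‖z‖ ^ 2 := by
    rw [norm_mul, norm_mul, norm_star, norm_qi]; ring
  have h2 : ‖star z * qi * w‖ = ‖z‖ * ‖w‖ := by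
    rw [norm_mul, norm_mul, norm_star, norm_qi]; ring
  rw [h1, norm_smul, h2]
  rw [Real.norm_eq_abs, abs_of_nonneg (by positivity)]
  field_simp
  ring
end

section
/- For any energy value f̃ > −μ₀M₀, on the level set {K = f̃} of the regularized Kepler Hamiltonian K(z,w) = |w|²/(8μ₀) + f|z|² − μ₀M₀ intersected with the KS cone with z ≠ 0, the image under K.S. lies in the level set {‖P‖²/(2μ₀) − (μ₀M₀+f̃)/‖Q‖ = −f} of a modified Kepler Hamiltonian; hence projections of regularized orbits to physical space are Keplerian ellipses of the Kepler problem with mass parameter M₀ + f̃/μ₀. -/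
/- STATEMENT 11: For f̃ > −μ₀M₀, on the KS cone with z ≠ 0, the level set
{K(z,w) = f̃} of K(z,w) = |w|²/(8μ₀) + f|z|² − μ₀M₀ is carried by K.S. into the
level set {‖P‖²/(2μ₀) − (μ₀M₀+f̃)/‖Q‖ = −f} of the modified Kepler Hamiltonian
(mass parameter M₀ + f̃/μ₀); hence projected regularized orbits are Keplerian
ellipses of the modified problem.  Precisely, K(z,w) = f̃ iff
‖P‖²/(2μ₀) − (μ₀M₀+f̃)/‖Q‖ = −f for (Q,P) = K.S.(z,w). -/
theorem KS_energy_levels (μ₀ M₀ f ftilde : ℝ) (hμ : 0 < μ₀) (hM : 0 < M₀)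
    (hf : 0 < f) (hft : -(μ₀ * M₀) < ftilde)
    (z w : Quaternion ℝ) (hz : z ≠ 0) (hBL : (star z * qi * w).re = 0) :
    (‖w‖ ^ 2 / (8 * μ₀) + f * ‖z‖ ^ 2 - μ₀ * M₀ = ftilde) ↔
    (‖((2 * ‖z‖ ^ 2)⁻¹ : ℝ) • (star z * qi * w)‖ ^ 2 / (2 * μ₀)
        - (μ₀ * M₀ + ftilde) / ‖star z * qi * z‖ = -f) := by
  have hzn : (0:ℝ) < ‖z‖ := norm_pos_iff.mpr hz
  have h1 : ‖star z * qi * w‖ = ‖z‖ * ‖w‖ := by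
    rw [norm_mul, norm_mul, norm_star, norm_qi, mul_one]
  have h2 : ‖star z * qi * z‖ = ‖z‖ ^ 2 := by
    rw [norm_mul, norm_mul, norm_star, norm_qi, mul_one, sq]
  have h3 : ‖((2 * ‖z‖ ^ 2)⁻¹ : ℝ) • (star z * qi * w)‖
      = (2 * ‖z‖ ^ 2)⁻¹ * (‖z‖ * ‖w‖) := by
    rw [norm_smul, h1, Real.norm_eq_abs, abs_of_pos (by positivity)]
  rw [h2, h3]
  have key : ((2 * ‖z‖ ^ 2)⁻¹ * (‖z‖ * ‖w‖)) ^ 2 / (2 * μ₀)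
      - (μ₀ * M₀ + ftilde) / ‖z‖ ^ 2
      = (‖w‖ ^ 2 / (8 * μ₀) + f * ‖z‖ ^ 2 - μ₀ * M₀ - ftilde) / ‖z‖ ^ 2 - f := by
    field_simp
    ring
  rw [key, sub_eq_neg_self, div_eq_zero_iff, sub_eq_zero]
  constructor
  · intro h; left; exact h
  · rintro (h | h)
    · exact h
    · exact absurd h (by positivity)
end

section
/- If x and y are unit quaternions satisfying Re{x̄ i y} = 0 and ⟨x, y⟩ = 0 (real inner product on ℍ ≅ ℝ⁴), then x̄ i x = −ȳ i y, and x̄ i y is a unit purely imaginary quaternion linearly independent of x̄ i x. -/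
open Quaternion in
lemma re_mul_comm (a b : Quaternion ℝ) : (a * b).re = (b * a).re := by
  simp only [Quaternion.re_mul]; ring

open Quaternion in
lemma star_mul_self_one {a : Quaternion ℝ} (h : ‖a‖ = 1) : star a * a = 1 := by
  have : (Quaternion.normSq a : ℝ) = 1 := by
    rw [Quaternion.normSq_eq_norm_mul_self, h, mul_one]
  rw [Quaternion.star_mul_self, this, Quaternion.coe_one]

open Quaternion in
lemma self_mul_star_one {a : Quaternion ℝ} (h : ‖a‖ = 1) : a * star a = 1 := by
  have : (Quaternion.normSq a : ℝ) = 1 := by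
    rw [Quaternion.normSq_eq_norm_mul_self, h, mul_one]
  rw [Quaternion.self_mul_star, this, Quaternion.coe_one]

/- STATEMENT 12: If x, y are unit quaternions with Re{x̄ i y} = 0 and ⟨x,y⟩ = 0
(real inner product ⟨x,y⟩ = Re{x̄ y}), then x̄ i x = −ȳ i y, and x̄ i y is a unit
purely imaginary quaternion linearly independent of x̄ i x. -/
theorem levi_civita_hopf_lemma (x y : Quaternion ℝ)
    (hx : ‖x‖ = 1) (hy : ‖y‖ = 1)
    (hBL : (star x * qi * y).re = 0) (horth : (star x * y).re = 0) :
    star x * qi * x = -(star y * qi * y) ∧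
    ‖star x * qi * y‖ = 1 ∧ (star x * qi * y).re = 0 ∧
    LinearIndependent ℝ ![star x * qi * x, star x * qi * y] := by
  have hxs : star x * x = 1 := star_mul_self_one hx
  have hxs' : x * star x = 1 := self_mul_star_one hx
  set u : Quaternion ℝ := y * star x with hu
  -- u is a unit quaternion
  have hnu : ‖u‖ = 1 := by rw [hu, norm_mul, Quaternion.norm_star, hx, hy, one_mul]
  -- u.re = 0
  have hure : u.re = 0 := by
    rw [hu, re_mul_comm]; exact horth
  -- u.imI = 0
  have huimI : u.imI = 0 := by
    have h1 : (star x * qi * y).re = (u * qi).re := by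
      rw [re_mul_comm (star x * qi) y, hu, mul_assoc]
    have h2 : (u * qi).re = -u.imI := by
      simp only [Quaternion.re_mul]; simp [qi]
    rw [h1, h2] at hBL
    linarith
  -- normSq of u
  have hnsu : u.imJ ^ 2 + u.imK ^ 2 = 1 := by
    have h := Quaternion.normSq_eq_norm_mul_self u
    rw [hnu, Quaternion.normSq_def'] at h
    rw [hure, huimI] at h
    linarith [h]
  -- u * qi * u = qi
  have huqiu : u * qi * u = qi := by
    ext <;>
      simp only [Quaternion.re_mul, Quaternion.imI_mul, Quaternion.imJ_mul,
        Quaternion.imK_mul] <;> simp [qi, hure, huimI] <;> nlinarith [hnsu]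
  -- star u = -u
  have hstaru : star u = -u := by
    ext <;> simp [Quaternion.re_star, hure]
  -- y = u * x
  have hyux : y = u * x := by
    rw [hu, mul_assoc, hxs, mul_one]
  -- Goal 1
  have hgoal1 : star x * qi * x = -(star y * qi * y) := by
    have : star y * qi * y = -(star x * qi * x) := by
      rw [hyux, star_mul, hstaru]
      have hrw : star x * -u * qi * (u * x) = -(star x * (u * qi * u) * x) := by
        noncomm_ring
      rw [hrw, huqiu]
    rw [this, neg_neg]
  refine ⟨hgoal1, ?_, hBL, ?_⟩
  · rw [norm_mul, norm_mul, Quaternion.norm_star, hx, hy, norm_qi]; ring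
  · -- linear independence
    rw [LinearIndependent.pair_iff]
    intro s t hst
    -- multiply on the left by x
    have h1 : s • (qi * x) + t • (qi * y) = 0 := by
      have := congrArg (fun z => x * z) hst
      simp only [mul_add, mul_smul_comm, mul_zero] at this
      rw [show x * (star x * qi * x) = qi * x by
            rw [show x * (star x * qi * x) = (x * star x) * qi * x by noncomm_ring, hxs',
              one_mul],
          show x * (star x * qi * y) = qi * y by
            rw [show x * (star x * qi * y) = (x * star x) * qi * y by noncomm_ring, hxs',
              one_mul]] at this
      exact this
    -- multiply on the left by star qi
    have hqistar : star qi * qi = 1 := by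
      apply star_mul_self_one norm_qi
    have h2 : s • x + t • y = 0 := by
      have := congrArg (fun z => star qi * z) h1
      simp only [mul_add, mul_smul_comm, mul_zero] at this
      rw [show star qi * (qi * x) = x by rw [← mul_assoc, hqistar, one_mul],
          show star qi * (qi * y) = y by rw [← mul_assoc, hqistar, one_mul]] at this
      exact this
    -- s = 0
    have hs : s = 0 := by
      have := congrArg (fun z => (star x * z).re) h2
      simp only [mul_add, mul_smul_comm, mul_zero, Quaternion.re_add, Quaternion.re_smul,
        Quaternion.re_zero, smul_eq_mul] at this
      rw [hxs, horth] at this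
      simp [Quaternion.re_one] at this
      exact this
    have ht : t = 0 := by
      rw [hs, zero_smul, zero_add] at h2
      have hy0 : y ≠ 0 := by
        intro h; rw [h, norm_zero] at hy; norm_num at hy
      exact (smul_eq_zero.mp h2).resolve_right hy0
    exact ⟨hs, ht⟩
end

section
/- The Hopf map z ↦ z̄ i z sends every Levi-Civita plane (a 2-plane in ℍ spanned by v₁,v₂ with Re{v̄₁ i v₂} = 0) onto a 2-plane through the origin in Im ℍ. -/
/-- The Hopf map z ↦ z̄ i z. -/
noncomputable def hopf (z : Quaternion ℝ) : Quaternion ℝ := star z * qi * z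

lemma star_qi : star qi = -qi := by ext <;> simp <;> norm_num [qi]

lemma star_eq_neg_of_re {q : Quaternion ℝ} (h : q.re = 0) : star q = -q := by
  ext <;> simp [h]

section main
variable (x y : Quaternion ℝ) (hx : ‖x‖ = 1) (hy : ‖y‖ = 1)
    (hBL : (star x * qi * y).re = 0) (horth : (star x * y).re = 0)

set_option linter.unusedSectionVars false

include hx hy hBL horth

lemma yix_eq : star y * qi * x = star x * qi * y := by
  have hB := star_eq_neg_of_re hBL
  rw [star_mul, star_mul, star_qi, star_star] at hB
  have := congrArg Neg.neg hB
  simp only [neg_neg, mul_neg, neg_mul] at this ⊢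
  linear_combination (norm := noncomm_ring) this

lemma yiy_eq : star y * qi * y = -(star x * qi * x) := by
  have hxn : Quaternion.normSq x = 1 := by
    rw [Quaternion.normSq_eq_norm_mul_self, hx]; ring
  have hyn : Quaternion.normSq y = 1 := by
    rw [Quaternion.normSq_eq_norm_mul_self, hy]; ring
  have hx1 : x * star x = 1 := by
    rw [Quaternion.self_mul_star, hxn]; norm_num
  set A := star x * qi * x with hA
  set q := star x * y with hqdef
  have hq : star q = -q := star_eq_neg_of_re horth
  have hqq : q * q = -1 := by
    have h1 : q * star q = Quaternion.normSq q := Quaternion.self_mul_star q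
    have h2 : Quaternion.normSq q = 1 := by
      rw [hqdef, map_mul, Quaternion.normSq_star, hxn, hyn]; ring
    rw [hq, h2, mul_neg] at h1
    norm_num at h1
    linear_combination (norm := noncomm_ring) -h1
  have hAq : A * q = star x * qi * y := by
    rw [hA, hqdef, mul_assoc (star x * qi) x, ← mul_assoc x, hx1, one_mul]
  have hanti : A * q + q * A = 0 := by
    have hsAq : star (A * q) = q * A := by
      rw [star_mul, hq, hA, star_mul, star_mul, star_qi, star_star]
      simp only [neg_mul, mul_neg, neg_neg]
      noncomm_ring
    have := Quaternion.self_add_star' (A * q)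
    rw [hsAq, hAq] at this
    rw [hAq, this, hBL]
    norm_num
  have hyq : x * q = y := by rw [hqdef, ← mul_assoc, hx1, one_mul]
  have hsy : star y = star q * star x := by rw [← hyq, star_mul]
  have expand : star y * qi * y = star q * A * q := by
    rw [hsy, ← hyq, hA]
    noncomm_ring
  rw [expand, hq]
  have hqA : -q * A = A * q := by
    rw [neg_mul]
    linear_combination (norm := noncomm_ring) -hanti
  rw [hqA, mul_assoc, hqq, mul_neg, mul_one]

lemma hopf_comb (a b : ℝ) :
    hopf (a • x + b • y)
      = (a^2 - b^2) • (star x * qi * x) + (2*(a*b)) • (star x * qi * y) := by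
  have h1 := yix_eq x y hx hy hBL horth
  have h2 := yiy_eq x y hx hy hBL horth
  simp only [hopf, star_add, Quaternion.star_smul, add_mul, mul_add,
    smul_mul_assoc, mul_smul_comm]
  rw [h1, h2]
  module

end main

lemma exists_sq (c d : ℝ) : ∃ a b : ℝ, a^2 - b^2 = c ∧ 2*(a*b) = d := by
  obtain ⟨z, hz⟩ := IsAlgClosed.exists_pow_nat_eq (k := ℂ) (c + d * Complex.I)
    (n := 2) two_pos
  refine ⟨z.re, z.im, ?_, ?_⟩
  · have := congrArg Complex.re hz
    simp [pow_two, Complex.mul_re, Complex.add_re, Complex.mul_im] at this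
    linarith [this]
  · have := congrArg Complex.im hz
    simp [pow_two, Complex.mul_re, Complex.add_im, Complex.mul_im] at this
    linarith [this]

theorem hopf_image_levi_civita_plane (x y : Quaternion ℝ)
    (hx : ‖x‖ = 1) (hy : ‖y‖ = 1)
    (hBL : (star x * qi * y).re = 0) (horth : (star x * y).re = 0) :
    hopf '' (Submodule.span ℝ {x, y} : Submodule ℝ (Quaternion ℝ))
      = (Submodule.span ℝ {star x * qi * x, star x * qi * y} :
          Submodule ℝ (Quaternion ℝ)) := by
  ext p
  constructor
  · rintro ⟨z, hz, rfl⟩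
    rw [SetLike.mem_coe, Submodule.mem_span_pair] at hz
    obtain ⟨a, b, rfl⟩ := hz
    rw [SetLike.mem_coe, hopf_comb x y hx hy hBL horth]
    exact Submodule.mem_span_pair.mpr ⟨_, _, rfl⟩
  · intro hp
    rw [SetLike.mem_coe, Submodule.mem_span_pair] at hp
    obtain ⟨c, d, rfl⟩ := hp
    obtain ⟨a, b, h1, h2⟩ := exists_sq c d
    refine ⟨a • x + b • y, ?_, ?_⟩
    · exact SetLike.mem_coe.mpr (Submodule.mem_span_pair.mpr ⟨a, b, rfl⟩)
    · rw [hopf_comb x y hx hy hBL horth, h1, h2]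
end

section
/- Restricted to a Levi-Civita plane E ⊂ ℍ with orthonormal basis r₁, r₂ (so Re{r̄₁ i r₂} = 0), the Hopf map acts as complex squaring: under the identifications r₁ ↦ 1, r₂ ↦ i of E with ℂ and r̄₁ i r₁ ↦ 1, r̄₁ i r₂ ↦ i of its image plane with ℂ, the quaternion c₁r₁ + c₂r₂ maps to (c₁² − c₂²) + 2c₁c₂ i = (c₁ + c₂ i)². -/
/- STATEMENT 15: On a Levi-Civita plane with orthonormal basis r₁, r₂
(Re{r̄₁ i r₂} = 0), the Hopf map acts as complex squaring: the image of
c₁r₁ + c₂r₂ is (c₁² − c₂²) r̄₁ i r₁ + 2c₁c₂ r̄₁ i r₂, i.e. under the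
identifications r₁ ∼ r̄₁ i r₁ ∼ 1, r₂ ∼ r̄₁ i r₂ ∼ i it is
(c₁ + c₂ i)² = (c₁² − c₂²) + 2c₁c₂ i. -/

private lemma anticomm (x y : Quaternion ℝ) (hx : x.re = 0) (hy : y.re = 0)
    (hxy : (x*y).re = 0) : x * y + y * x = 0 := by
  ext <;> simp_all [Quaternion.re_mul, Quaternion.imI_mul, Quaternion.imJ_mul,
    Quaternion.imK_mul, Quaternion.re_zero, Quaternion.imI_zero, Quaternion.imJ_zero,
    Quaternion.imK_zero] <;> ring_nf <;> nlinarith [sq_nonneg x.imI]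

set_option maxHeartbeats 1000000 in
theorem hopf_is_squaring_on_LC_plane (r₁ r₂ : Quaternion ℝ)
    (h₁ : ‖r₁‖ = 1) (h₂ : ‖r₂‖ = 1)
    (hBL : (star r₁ * qi * r₂).re = 0) (horth : (star r₁ * r₂).re = 0)
    (c₁ c₂ : ℝ) :
    star (c₁ • r₁ + c₂ • r₂) * qi * (c₁ • r₁ + c₂ • r₂)
      = (c₁ ^ 2 - c₂ ^ 2) • (star r₁ * qi * r₁)
        + (2 * c₁ * c₂) • (star r₁ * qi * r₂) := by
  have hn1 : Quaternion.normSq r₁ = 1 := by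
    rw [Quaternion.normSq_eq_norm_mul_self, h₁]; norm_num
  have hn2 : Quaternion.normSq r₂ = 1 := by
    rw [Quaternion.normSq_eq_norm_mul_self, h₂]; norm_num
  have hr1s : r₁ * star r₁ = 1 := by
    rw [Quaternion.self_mul_star, hn1]; norm_num
  have hr2 : r₂ = r₁ * (star r₁ * r₂) := by rw [← mul_assoc, hr1s, one_mul]
  set u : Quaternion ℝ := star r₁ * r₂ with hu
  set A : Quaternion ℝ := star r₁ * qi * r₁ with hA
  set B : Quaternion ℝ := star r₁ * qi * r₂ with hB
  have hAre : A.re = 0 := by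
    rw [hA]
    simp only [Quaternion.re_mul, Quaternion.imI_mul, Quaternion.imJ_mul, Quaternion.imK_mul,
      Quaternion.re_star, Quaternion.imI_star, Quaternion.imJ_star, Quaternion.imK_star]
    simp [qi]; ring
  have hure : u.re = 0 := horth
  have hAu : A * u = B := by
    rw [hA, hu, hB]; rw [mul_assoc (star r₁ * qi) r₁ _, ← mul_assoc r₁ _ _, hr1s, one_mul]
  have hAure : (A * u).re = 0 := by rw [hAu]; exact hBL
  have hsu : star u = -u := Quaternion.star_eq_neg.mpr hure
  have huu : u * u = -1 := by
    have h3 : star u * u = Quaternion.normSq u := Quaternion.star_mul_self u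
    rw [hsu, neg_mul] at h3
    have hnu : Quaternion.normSq u = 1 := by
      rw [hu, map_mul, Quaternion.normSq_star, hn1, hn2]; norm_num
    rw [hnu] at h3
    have := neg_eq_iff_eq_neg.mp h3
    simpa using this
  have hac : A * u + u * A = 0 := anticomm A u hAre hure hAure
  have h2 : u * A = -(A * u) := by rw [eq_neg_iff_add_eq_zero, add_comm]; exact hac
  have hC : star r₂ * qi * r₁ = B := by
    have h1 : star r₂ * qi * r₁ = star u * A := by
      rw [hr2, star_mul, hA]; simp only [mul_assoc]
    rw [h1, hsu, neg_mul, h2, neg_neg, hAu]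
  have hD : star r₂ * qi * r₂ = -A := by
    have h1 : star r₂ * qi * r₂ = star u * A * u := by
      conv_lhs => rw [hr2]
      rw [star_mul, hA]; simp only [mul_assoc]
    have h4 : u * A * u = A := by
      rw [h2, neg_mul, mul_assoc, huu, mul_neg_one, neg_neg]
    rw [h1, hsu, neg_mul, neg_mul, h4]
  have hC' : star r₂ * (qi * r₁) = star r₁ * (qi * r₂) := by
    simpa only [mul_assoc, hB] using hC
  have hD' : star r₂ * (qi * r₂) = -(star r₁ * (qi * r₁)) := by
    simpa only [mul_assoc, hA] using hD
  rw [hA, hB]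
  simp only [star_add, Quaternion.star_smul, star_trivial, add_mul, mul_add, smul_mul_assoc,
    mul_smul_comm, smul_smul, mul_assoc, hC', hD']
  module
end

section
/- Rotation Lemma: let R₁^I denote simultaneous rotation of both factors of ℝ³×ℝ³ about the first axis by angle I, and R₃^h simultaneous rotation about the third axis by angle h. If (x'₁,x'₂,x'₃,y'₁,y'₂,y'₃) = R₃^h ∘ R₁^I (x₁,x₂,0,y₁,y₂,0), where I and h are (smooth) functions on the parameter space, then dy'₁∧dx'₁ + dy'₂∧dx'₂ + dy'₃∧dx'₃ = dy₁∧dx₁ + dy₂∧dx₂ + d(x'₁y'₂ − x'₂y'₁) ∧ dh. -/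
noncomputable section

variable {E : Type*} [NormedAddCommGroup E] [NormedSpace ℝ E]

/-- First component of R₃^h ∘ R₁^I applied to (a₁, a₂, 0). -/
def rot1 (a₁ a₂ I h : E → ℝ) (p : E) : ℝ :=
  a₁ p * Real.cos (h p) - a₂ p * Real.cos (I p) * Real.sin (h p)

/-- Second component of R₃^h ∘ R₁^I applied to (a₁, a₂, 0). -/
def rot2 (a₁ a₂ I h : E → ℝ) (p : E) : ℝ :=
  a₁ p * Real.sin (h p) + a₂ p * Real.cos (I p) * Real.cos (h p)

/-- Third component of R₃^h ∘ R₁^I applied to (a₁, a₂, 0). -/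
def rot3 (a₁ a₂ I h : E → ℝ) (p : E) : ℝ :=
  a₂ p * Real.sin (I p)

/-- The 2-form df ∧ dg evaluated at p on tangent vectors u, v. -/
def wedge2 (f g : E → ℝ) (p : E) (u v : E) : ℝ :=
  fderiv ℝ f p u * fderiv ℝ g p v - fderiv ℝ f p v * fderiv ℝ g p u

lemma diff_rot1 (a₁ a₂ I h : E → ℝ) (h1 : Differentiable ℝ a₁) (h2 : Differentiable ℝ a₂)
    (hI : Differentiable ℝ I) (hh : Differentiable ℝ h) :
    Differentiable ℝ (rot1 a₁ a₂ I h) :=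
  (h1.mul hh.cos).sub ((h2.mul hI.cos).mul hh.sin)

lemma diff_rot2 (a₁ a₂ I h : E → ℝ) (h1 : Differentiable ℝ a₁) (h2 : Differentiable ℝ a₂)
    (hI : Differentiable ℝ I) (hh : Differentiable ℝ h) :
    Differentiable ℝ (rot2 a₁ a₂ I h) :=
  (h1.mul hh.sin).add ((h2.mul hI.cos).mul hh.cos)

lemma fd_rot1 (a₁ a₂ I h : E → ℝ) (h1 : Differentiable ℝ a₁) (h2 : Differentiable ℝ a₂)
    (hI : Differentiable ℝ I) (hh : Differentiable ℝ h) (p w : E) :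
    fderiv ℝ (rot1 a₁ a₂ I h) p w =
      fderiv ℝ a₁ p w * Real.cos (h p) - a₁ p * Real.sin (h p) * fderiv ℝ h p w
      - ((fderiv ℝ a₂ p w * Real.cos (I p) - a₂ p * Real.sin (I p) * fderiv ℝ I p w)
            * Real.sin (h p)
          + a₂ p * Real.cos (I p) * Real.cos (h p) * fderiv ℝ h p w) := by
  have H : HasFDerivAt (rot1 a₁ a₂ I h) _ p :=
    ((h1 p).hasFDerivAt.mul ((hh p).hasFDerivAt.cos)).sub
      (((h2 p).hasFDerivAt.mul ((hI p).hasFDerivAt.cos)).mul ((hh p).hasFDerivAt.sin))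
  rw [H.fderiv]
  simp
  ring

lemma fd_rot2 (a₁ a₂ I h : E → ℝ) (h1 : Differentiable ℝ a₁) (h2 : Differentiable ℝ a₂)
    (hI : Differentiable ℝ I) (hh : Differentiable ℝ h) (p w : E) :
    fderiv ℝ (rot2 a₁ a₂ I h) p w =
      fderiv ℝ a₁ p w * Real.sin (h p) + a₁ p * Real.cos (h p) * fderiv ℝ h p w
      + ((fderiv ℝ a₂ p w * Real.cos (I p) - a₂ p * Real.sin (I p) * fderiv ℝ I p w)
            * Real.cos (h p)
          - a₂ p * Real.cos (I p) * Real.sin (h p) * fderiv ℝ h p w) := by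
  have H : HasFDerivAt (rot2 a₁ a₂ I h) _ p :=
    ((h1 p).hasFDerivAt.mul ((hh p).hasFDerivAt.sin)).add
      (((h2 p).hasFDerivAt.mul ((hI p).hasFDerivAt.cos)).mul ((hh p).hasFDerivAt.cos))
  rw [H.fderiv]
  simp
  ring

lemma fd_rot3 (a₁ a₂ I h : E → ℝ) (h2 : Differentiable ℝ a₂)
    (hI : Differentiable ℝ I) (p w : E) :
    fderiv ℝ (rot3 a₁ a₂ I h) p w =
      fderiv ℝ a₂ p w * Real.sin (I p) + a₂ p * Real.cos (I p) * fderiv ℝ I p w := by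
  have H : HasFDerivAt (rot3 a₁ a₂ I h) _ p :=
    (h2 p).hasFDerivAt.mul ((hI p).hasFDerivAt.sin)
  rw [H.fderiv]
  simp
  ring

/- STATEMENT 19 (Rotation Lemma): with
(x'₁,x'₂,x'₃,y'₁,y'₂,y'₃) = R₃^h ∘ R₁^I (x₁,x₂,0,y₁,y₂,0), where x₁,x₂,y₁,y₂,I,h
are smooth functions on a parameter space, one has
dy'₁∧dx'₁ + dy'₂∧dx'₂ + dy'₃∧dx'₃ = dy₁∧dx₁ + dy₂∧dx₂ + d(x'₁y'₂ − x'₂y'₁)∧dh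
as an identity of differential 2-forms. -/
theorem rotation_lemma (x₁ x₂ y₁ y₂ I h : E → ℝ)
    (hx₁ : Differentiable ℝ x₁) (hx₂ : Differentiable ℝ x₂)
    (hy₁ : Differentiable ℝ y₁) (hy₂ : Differentiable ℝ y₂)
    (hI : Differentiable ℝ I) (hh : Differentiable ℝ h)
    (p : E) (u v : E) :
    wedge2 (rot1 y₁ y₂ I h) (rot1 x₁ x₂ I h) p u v
      + wedge2 (rot2 y₁ y₂ I h) (rot2 x₁ x₂ I h) p u v
      + wedge2 (rot3 y₁ y₂ I h) (rot3 x₁ x₂ I h) p u v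
    = wedge2 y₁ x₁ p u v + wedge2 y₂ x₂ p u v
      + wedge2 (fun q => rot1 x₁ x₂ I h q * rot2 y₁ y₂ I h q
            - rot2 x₁ x₂ I h q * rot1 y₁ y₂ I h q) h p u v := by
  have hr1x := diff_rot1 x₁ x₂ I h hx₁ hx₂ hI hh
  have hr2x := diff_rot2 x₁ x₂ I h hx₁ hx₂ hI hh
  have hr1y := diff_rot1 y₁ y₂ I h hy₁ hy₂ hI hh
  have hr2y := diff_rot2 y₁ y₂ I h hy₁ hy₂ hI hh
  have hF : ∀ w : E, fderiv ℝ (fun q => rot1 x₁ x₂ I h q * rot2 y₁ y₂ I h q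
        - rot2 x₁ x₂ I h q * rot1 y₁ y₂ I h q) p w =
      fderiv ℝ (rot1 x₁ x₂ I h) p w * rot2 y₁ y₂ I h p
        + rot1 x₁ x₂ I h p * fderiv ℝ (rot2 y₁ y₂ I h) p w
        - (fderiv ℝ (rot2 x₁ x₂ I h) p w * rot1 y₁ y₂ I h p
        + rot2 x₁ x₂ I h p * fderiv ℝ (rot1 y₁ y₂ I h) p w) := by
    intro w
    rw [fderiv_fun_sub (f := fun q => rot1 x₁ x₂ I h q * rot2 y₁ y₂ I h q)
        (g := fun q => rot2 x₁ x₂ I h q * rot1 y₁ y₂ I h q)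
        ((hr1x p).mul (hr2y p)) ((hr2x p).mul (hr1y p)),
      fderiv_fun_mul (hr1x p) (hr2y p), fderiv_fun_mul (hr2x p) (hr1y p)]
    simp
    ring
  simp only [wedge2]
  rw [hF u, hF v]
  simp only [
    fd_rot1 x₁ x₂ I h hx₁ hx₂ hI hh, fd_rot2 x₁ x₂ I h hx₁ hx₂ hI hh,
    fd_rot3 x₁ x₂ I h hx₂ hI,
    fd_rot1 y₁ y₂ I h hy₁ hy₂ hI hh, fd_rot2 y₁ y₂ I h hy₁ hy₂ hI hh,
    fd_rot3 y₁ y₂ I h hy₂ hI, rot1, rot2, rot3]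
  linear_combination
    ((Real.sin (h p)) ^ 2 + (Real.cos (h p)) ^ 2)
        * (fderiv ℝ y₂ p u * fderiv ℝ x₂ p v - fderiv ℝ x₂ p u * fderiv ℝ y₂ p v)
        * Real.sin_sq_add_cos_sq (I p)
    + (fderiv ℝ y₂ p u * fderiv ℝ x₂ p v + fderiv ℝ y₁ p u * fderiv ℝ x₁ p v
        - fderiv ℝ x₂ p u * fderiv ℝ y₂ p v - fderiv ℝ x₁ p u * fderiv ℝ y₁ p v
        - (Real.sin (I p)) ^ 2
            * (fderiv ℝ y₂ p u * fderiv ℝ x₂ p v - fderiv ℝ x₂ p u * fderiv ℝ y₂ p v)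
        - y₂ p * Real.cos (I p) * Real.sin (I p)
            * (fderiv ℝ I p u * fderiv ℝ x₂ p v - fderiv ℝ x₂ p u * fderiv ℝ I p v)
        + x₂ p * Real.cos (I p) * Real.sin (I p)
            * (fderiv ℝ I p u * fderiv ℝ y₂ p v - fderiv ℝ y₂ p u * fderiv ℝ I p v))
        * Real.sin_sq_add_cos_sq (h p)

end
end
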